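/- arXiv:1910.13865 — 2 statements merged into one kernel-verified Lean document; each statement's English description precedes it below -/
import Mathlib

section
/- Let A be a real symmetric positive definite N×N matrix such that for every μ ≥ 0 all entries of the matrix (μI + A)^{-1} are nonnegative. Then for every α ∈ (0,1) all entries of A^{-α} are nonnegative (i.e., A^{-α} is positivity preserving). -/
open MeasureTheory Set Real

lemma frac_integrable {α l : ℝ} (hα : α ∈ Set.Ioo (0:ℝ) 1) (hl : 0 < l) :
    IntegrableOn (fun t => t ^ (-α) * (t + l)⁻¹) (Set.Ioi 0) := by
  obtain ⟨hα0, hα1⟩ := hα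
  have hmeas : AEStronglyMeasurable (fun t : ℝ => t ^ (-α) * (t + l)⁻¹) volume := by
    apply Measurable.aestronglyMeasurable; fun_prop
  rw [show Set.Ioi (0:ℝ) = Set.Ioc 0 1 ∪ Set.Ioi 1 from
    (Set.Ioc_union_Ioi_eq_Ioi (by norm_num)).symm]
  apply IntegrableOn.union
  · have hdom : IntegrableOn (fun t : ℝ => l⁻¹ * t ^ (-α)) (Set.Ioc 0 1) := by
      have := (intervalIntegrable_iff_integrableOn_Ioc_of_le
        (a := (0:ℝ)) (b := 1) (by norm_num)).1
        (intervalIntegral.intervalIntegrable_rpow' (r := -α) (by linarith))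
      exact this.const_mul _
    refine Integrable.mono hdom (hmeas.restrict) ?_
    filter_upwards [ae_restrict_mem measurableSet_Ioc] with t ht
    obtain ⟨ht0, ht1⟩ := ht
    have h1 : (0:ℝ) ≤ t ^ (-α) := Real.rpow_nonneg ht0.le _
    have h2 : (0:ℝ) < t + l := by linarith
    rw [Real.norm_eq_abs, Real.norm_eq_abs, abs_of_nonneg (by positivity),
      abs_of_nonneg (by positivity)]
    rw [mul_comm l⁻¹]
    exact mul_le_mul_of_nonneg_left (inv_anti₀ hl (by linarith)) h1
  · have hdom : IntegrableOn (fun t : ℝ => t ^ (-α - 1)) (Set.Ioi 1) :=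
      integrableOn_Ioi_rpow_of_lt (by linarith) one_pos
    refine Integrable.mono hdom (hmeas.restrict) ?_
    filter_upwards [ae_restrict_mem measurableSet_Ioi] with t ht
    have ht0 : (0:ℝ) < t := lt_trans one_pos ht
    have h2 : (0:ℝ) < t + l := by linarith
    rw [Real.norm_eq_abs, Real.norm_eq_abs, abs_of_nonneg (by positivity),
      abs_of_nonneg (Real.rpow_nonneg ht0.le _)]
    have heq : t ^ (-α - 1) = t ^ (-α) * t⁻¹ := by
      rw [Real.rpow_sub ht0, Real.rpow_one, div_eq_mul_inv]
    rw [heq]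
    exact mul_le_mul_of_nonneg_left (inv_anti₀ ht0 (by linarith)) (Real.rpow_nonneg ht0.le _)

lemma frac_subst {α l : ℝ} (hα : α ∈ Set.Ioo (0:ℝ) 1) (hl : 0 < l) :
    ∫ t in Set.Ioi (0:ℝ), t ^ (-α) * (t + l)⁻¹
      = l ^ (-α) * ∫ t in Set.Ioi (0:ℝ), t ^ (-α) * (t + 1)⁻¹ := by
  have h1 := integral_comp_mul_left_Ioi (fun t => t ^ (-α) * (t + l)⁻¹) 0 hl
  rw [mul_zero] at h1
  have h2 : ∫ x in Set.Ioi (0:ℝ), (l * x) ^ (-α) * (l * x + l)⁻¹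
      = (l ^ (-α) * l⁻¹) * ∫ t in Set.Ioi (0:ℝ), t ^ (-α) * (t + 1)⁻¹ := by
    rw [← integral_const_mul]
    apply setIntegral_congr_fun measurableSet_Ioi
    intro x hx
    have hx0 : (0:ℝ) < x := hx
    have : l * x + l = l * (x + 1) := by ring
    simp only [this, Real.mul_rpow hl.le hx0.le, mul_inv]
    ring
  rw [h2] at h1
  have hl' : l ≠ 0 := hl.ne'
  field_simp [smul_eq_mul] at h1 ⊢
  rw [h1, smul_eq_mul, one_div, mul_inv_cancel_left₀ hl']

lemma frac_Cpos {α : ℝ} (hα : α ∈ Set.Ioo (0:ℝ) 1) :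
    0 < ∫ t in Set.Ioi (0:ℝ), t ^ (-α) * (t + 1)⁻¹ := by
  rw [setIntegral_pos_iff_support_of_nonneg_ae]
  · have hsub : Set.Ioi (0:ℝ) ⊆ Function.support (fun t => t ^ (-α) * (t + 1)⁻¹) ∩ Set.Ioi 0 := by
      intro t ht
      have ht0 : (0:ℝ) < t := ht
      refine ⟨?_, ht⟩
      simp only [Function.mem_support]
      positivity
    calc (0:ENNReal) < volume (Set.Ioi (0:ℝ)) := by simp
      _ ≤ _ := measure_mono hsub
  · filter_upwards [ae_restrict_mem measurableSet_Ioi] with t ht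
    have ht0 : (0:ℝ) < t := ht
    positivity
  · exact frac_integrable hα one_pos

/-- If `A` is a real symmetric positive definite `N×N` matrix (given through an orthonormal
eigenbasis `ψ j` with positive eigenvalues `lam j`) such that all entries of `(μI + A)⁻¹`
are nonnegative for every `μ ≥ 0`, then for every `α ∈ (0,1)` all entries of
`A^{-α}` (the matrix with entries `∑ j, lam j ^ (-α) * ψ j i * ψ j i'`) are nonnegative. -/
theorem fractional_power_positivity_preserving {N : ℕ}
    (A : Matrix (Fin N) (Fin N) ℝ) (hA : A.IsSymm)
    (ψ : Fin N → Fin N → ℝ) (lam : Fin N → ℝ)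
    (hpos : ∀ j, 0 < lam j)
    (horth : ∀ j j', ∑ i, ψ j i * ψ j' i = if j = j' then (1 : ℝ) else 0)
    (heig : ∀ j, A.mulVec (ψ j) = lam j • ψ j)
    (hres : ∀ μ : ℝ, 0 ≤ μ → ∀ i i', 0 ≤ ((μ • (1 : Matrix (Fin N) (Fin N) ℝ) + A)⁻¹) i i') :
    ∀ α ∈ Set.Ioo (0 : ℝ) 1, ∀ i i', 0 ≤ ∑ j, lam j ^ (-α) * ψ j i * ψ j i' := by
  -- completeness of the eigenbasis
  have hcomp : ∀ i i' : Fin N, ∑ j, ψ j i * ψ j i' = if i = i' then (1:ℝ) else 0 := by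
    set P : Matrix (Fin N) (Fin N) ℝ := Matrix.of fun j i => ψ j i with hP
    have hPPT : P * P.transpose = 1 := by
      ext j j'
      simp only [Matrix.mul_apply, Matrix.transpose_apply, Matrix.of_apply, hP,
        Matrix.one_apply]
      exact horth j j'
    have hPTP : P.transpose * P = 1 := mul_eq_one_comm.mp hPPT
    intro i i'
    have := congrFun (congrFun (congrArg (fun M => (M : Matrix (Fin N) (Fin N) ℝ)) hPTP) i) i'
    simpa only [Matrix.mul_apply, Matrix.transpose_apply, Matrix.of_apply, hP,
      Matrix.one_apply] using this
  -- spectral formula for the resolvent, hence nonnegativity of its entries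
  have hres' : ∀ μ : ℝ, 0 ≤ μ → ∀ i i',
      0 ≤ ∑ j, (μ + lam j)⁻¹ * ψ j i * ψ j i' := by
    intro μ hμ i i'
    have hBinv : (μ • (1 : Matrix (Fin N) (Fin N) ℝ) + A)⁻¹
        = Matrix.of fun i i' => ∑ j, (μ + lam j)⁻¹ * ψ j i * ψ j i' := by
      apply Matrix.inv_eq_right_inv
      ext i k
      simp only [Matrix.mul_apply, Matrix.add_apply, Matrix.smul_apply, Matrix.one_apply,
        Matrix.of_apply, smul_eq_mul, mul_ite, mul_one, mul_zero]
      have swap : (∑ l, ((if i = l then μ else 0) + A i l) *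
            ∑ j, (μ + lam j)⁻¹ * ψ j l * ψ j k)
          = ∑ j, ∑ l, ((if i = l then μ else 0) + A i l) *
            ((μ + lam j)⁻¹ * ψ j l * ψ j k) := by
        simp_rw [Finset.mul_sum]
        exact Finset.sum_comm
      rw [swap]
      have step1 : ∀ j : Fin N, ∑ l, ((if i = l then μ else 0) + A i l) *
          ((μ + lam j)⁻¹ * ψ j l * ψ j k) = ψ j i * ψ j k := by
        intro j
        have hAψ : ∑ l, A i l * ψ j l = lam j * ψ j i := by
          have := congrFun (heig j) i
          simpa [Matrix.mulVec, dotProduct] using this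
        have hne : μ + lam j ≠ 0 := by have := hpos j; positivity
        have expand : ∑ l, ((if i = l then μ else 0) + A i l) *
            ((μ + lam j)⁻¹ * ψ j l * ψ j k)
            = μ * ((μ + lam j)⁻¹ * ψ j i * ψ j k)
              + (μ + lam j)⁻¹ * ψ j k * ∑ l, A i l * ψ j l := by
          simp_rw [add_mul, Finset.sum_add_distrib]
          congr 1
          · simp [ite_mul, Finset.sum_ite_eq, mul_comm]
          · rw [Finset.mul_sum]
            exact Finset.sum_congr rfl fun l _ => by ring
        rw [expand, hAψ]
        field_simp
      rw [Finset.sum_congr rfl fun j _ => step1 j, hcomp i k]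
    have := hres μ hμ i i'
    rw [hBinv] at this
    simpa using this
  intro α hα i i'
  have hC := frac_Cpos hα
  set C := ∫ t in Set.Ioi (0:ℝ), t ^ (-α) * (t + 1)⁻¹ with hCdef
  have hrep : ∀ j, lam j ^ (-α)
      = C⁻¹ * ∫ μ in Set.Ioi (0:ℝ), μ ^ (-α) * (μ + lam j)⁻¹ := by
    intro j
    rw [frac_subst hα (hpos j), ← hCdef]
    field_simp
  have hmain : ∑ j, lam j ^ (-α) * ψ j i * ψ j i'
      = C⁻¹ * ∫ μ in Set.Ioi (0:ℝ),
          ∑ j, μ ^ (-α) * (μ + lam j)⁻¹ * (ψ j i * ψ j i') := by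
    rw [integral_finset_sum _ (fun j _ => (frac_integrable hα (hpos j)).mul_const _),
      Finset.mul_sum]
    exact Finset.sum_congr rfl fun j _ => by rw [integral_mul_const, hrep j]; ring
  rw [hmain]
  apply mul_nonneg (inv_nonneg.mpr hC.le)
  apply setIntegral_nonneg measurableSet_Ioi
  intro μ hμ
  have hμ0 : (0:ℝ) < μ := hμ
  have hsum : ∑ j, μ ^ (-α) * (μ + lam j)⁻¹ * (ψ j i * ψ j i')
      = μ ^ (-α) * ∑ j, (μ + lam j)⁻¹ * ψ j i * ψ j i' := by
    rw [Finset.mul_sum]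
    exact Finset.sum_congr rfl fun j _ => by ring
  rw [hsum]
  exact mul_nonneg (Real.rpow_nonneg hμ0.le _) (hres' μ hμ0.le i i')
end

section
/- Let A be a real symmetric positive definite N×N matrix with smallest eigenvalue λ_1 > 0, let α ∈ (0,1), let E ≥ 0, and let r : ℝ → ℝ be a function satisfying |r(t) - t^α| ≤ E for all t ∈ (0,1]. Then for every f ∈ ℝ^N, the fully discrete approximation w = λ_1^{-α} r(λ_1 A^{-1}) f of u = A^{-α} f satisfies ‖u - w‖₂ ≤ λ_1^{-α} E ‖f‖₂, where ‖·‖₂ is the Euclidean norm on ℝ^N. -/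
/-- The Euclidean norm on `ℝ^N`. -/
noncomputable def enorm2 {N : ℕ} (v : Fin N → ℝ) : ℝ := Real.sqrt (∑ i, v i ^ 2)

/-- Plancherel-type identity for an orthonormal family. -/
lemma orth_sum_sq {N : ℕ} (ψ : Fin N → Fin N → ℝ)
    (horth : ∀ j j', ∑ i, ψ j i * ψ j' i = if j = j' then (1 : ℝ) else 0)
    (a : Fin N → ℝ) : ∑ i, (∑ j, a j * ψ j i) ^ 2 = ∑ j, a j ^ 2 := by
  have h1 : ∀ i, (∑ j, a j * ψ j i) ^ 2
      = ∑ j, ∑ j', (a j * a j') * (ψ j i * ψ j' i) := by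
    intro i
    rw [sq, Finset.sum_mul_sum]
    apply Finset.sum_congr rfl; intro j _
    apply Finset.sum_congr rfl; intro j' _
    ring
  simp_rw [h1]
  rw [Finset.sum_comm]
  have h2 : ∀ j, ∑ i, ∑ j', (a j * a j') * (ψ j i * ψ j' i) = a j ^ 2 := by
    intro j
    rw [Finset.sum_comm]
    have : ∀ j', ∑ i, (a j * a j') * (ψ j i * ψ j' i)
        = (a j * a j') * if j = j' then (1 : ℝ) else 0 := by
      intro j'
      rw [← Finset.mul_sum, horth]
    simp_rw [this]
    simp [mul_ite, mul_zero, sq]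
  simp_rw [h2]

/-- Error bound for the fully discrete BURA approximation: if `A` is symmetric positive
definite with orthonormal eigenvectors `ψ j` and (nondecreasingly ordered) eigenvalues
`lam j`, with smallest eigenvalue `lam ⟨0,hN⟩ > 0`, `α ∈ (0,1)`, and `r` satisfies
`|r(t) - t^α| ≤ E` on `(0,1]`, then `w = λ₁^{-α} r(λ₁ A⁻¹) f` approximates `u = A^{-α} f`
with `‖u - w‖₂ ≤ λ₁^{-α} E ‖f‖₂`. -/
theorem fully_discrete_bura_error {N : ℕ} (hN : 0 < N)
    (A : Matrix (Fin N) (Fin N) ℝ) (hA : A.IsSymm)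
    (ψ : Fin N → Fin N → ℝ) (lam : Fin N → ℝ)
    (hpos : ∀ j, 0 < lam j) (hmono : Monotone lam)
    (horth : ∀ j j', ∑ i, ψ j i * ψ j' i = if j = j' then (1 : ℝ) else 0)
    (heig : ∀ j, A.mulVec (ψ j) = lam j • ψ j)
    (α : ℝ) (hα : α ∈ Set.Ioo (0 : ℝ) 1)
    (E : ℝ) (hE : 0 ≤ E) (r : ℝ → ℝ)
    (hr : ∀ t ∈ Set.Ioc (0 : ℝ) 1, |r t - t ^ α| ≤ E)
    (f u w : Fin N → ℝ)
    (hu : u = fun i => ∑ j, lam j ^ (-α) * (∑ i', f i' * ψ j i') * ψ j i)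
    (hw : w = fun i =>
      lam ⟨0, hN⟩ ^ (-α) * ∑ j, r (lam ⟨0, hN⟩ / lam j) * (∑ i', f i' * ψ j i') * ψ j i) :
    enorm2 (u - w) ≤ lam ⟨0, hN⟩ ^ (-α) * E * enorm2 f := by
  set l1 := lam ⟨0, hN⟩ with hl1
  have hl1pos : 0 < l1 := hpos _
  have hKpos : (0:ℝ) < l1 ^ (-α) := Real.rpow_pos_of_pos hl1pos _
  set K := l1 ^ (-α) * E with hK
  have hK0 : 0 ≤ K := mul_nonneg hKpos.le hE
  set g : Fin N → ℝ := fun j => ∑ i', f i' * ψ j i' with hg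
  set c : Fin N → ℝ := fun j => lam j ^ (-α) - l1 ^ (-α) * r (l1 / lam j) with hc
  -- coefficient bound
  have hcb : ∀ j, |c j| ≤ K := by
    intro j
    have hle : l1 ≤ lam j := hmono (by simp [Fin.le_def])
    have ht : l1 / lam j ∈ Set.Ioc (0:ℝ) 1 :=
      ⟨div_pos hl1pos (hpos j), (div_le_one (hpos j)).mpr hle⟩
    have hrew : lam j ^ (-α) = l1 ^ (-α) * (l1 / lam j) ^ α := by
      rw [Real.div_rpow hl1pos.le (hpos j).le, Real.rpow_neg hl1pos.le,
        Real.rpow_neg (hpos j).le]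
      field_simp
    have : c j = l1 ^ (-α) * ((l1 / lam j) ^ α - r (l1 / lam j)) := by
      simp only [hc]; rw [hrew]; ring
    rw [this, abs_mul, abs_of_pos hKpos, abs_sub_comm]
    exact mul_le_mul_of_nonneg_left (hr _ ht) hKpos.le
  -- rewrite u - w
  have hdiff : u - w = fun i => ∑ j, (c j * g j) * ψ j i := by
    funext i
    simp only [Pi.sub_apply, hu, hw]
    rw [Finset.mul_sum, ← Finset.sum_sub_distrib]
    refine Finset.sum_congr rfl fun j _ => ?_
    simp only [hc, hg]; ring
  -- Parseval for f via the transposed orthonormality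
  have horthT : ∀ i i', ∑ j, ψ j i * ψ j i' = if i = i' then (1 : ℝ) else 0 := by
    set Ψ : Matrix (Fin N) (Fin N) ℝ := Matrix.of ψ with hΨ
    have h1 : Ψ * Ψ.transpose = 1 := by
      ext j j'
      simpa [hΨ, Matrix.mul_apply, Matrix.transpose_apply, Matrix.one_apply] using horth j j'
    have h2 : Ψ.transpose * Ψ = 1 := mul_eq_one_comm.mp h1
    intro i i'
    have := congrFun (congrFun h2 i) i'
    simpa [hΨ, Matrix.mul_apply, Matrix.transpose_apply, Matrix.one_apply, mul_comm] using this
  have hpars : ∑ j, g j ^ 2 = ∑ i, f i ^ 2 := by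
    have := orth_sum_sq (fun i j => ψ j i)
      (fun i i' => horthT i i') f
    simpa [hg] using this
  -- norm computation
  rw [hdiff]
  simp only [enorm2]
  have hsum : ∑ i, (∑ j, (c j * g j) * ψ j i) ^ 2 = ∑ j, (c j * g j) ^ 2 :=
    orth_sum_sq ψ horth _
  rw [hsum]
  have hbound : ∑ j, (c j * g j) ^ 2 ≤ K ^ 2 * ∑ i, f i ^ 2 := by
    rw [← hpars, Finset.mul_sum]
    apply Finset.sum_le_sum
    intro j _
    rw [mul_pow]
    have : c j ^ 2 ≤ K ^ 2 := by
      rw [← sq_abs (c j)]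
      exact pow_le_pow_left₀ (abs_nonneg _) (hcb j) 2
    exact mul_le_mul_of_nonneg_right this (sq_nonneg _)
  calc Real.sqrt (∑ j, (c j * g j) ^ 2) ≤ Real.sqrt (K ^ 2 * ∑ i, f i ^ 2) :=
        Real.sqrt_le_sqrt hbound
    _ = K * Real.sqrt (∑ i, f i ^ 2) := by
        rw [Real.sqrt_mul (sq_nonneg K), Real.sqrt_sq hK0]
end
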